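/- Let R be a finite set of n = 3f+1 replicas and B ⊆ R with |B| ≤ f. Let V be a type of proposal values and vote : R → Option V record, for each replica, the unique vote it cast in a fixed view (correct replicas vote at most once per view). If there exist subsets Q1, Q2 ⊆ R with |Q1| ≥ 2f+1 and |Q2| ≥ 2f+1 such that vote r = some p for every correct replica r ∈ Q1 \ B and vote r = some p' for every correct replica r ∈ Q2 \ B, then p = p'. In particular, within a single view there cannot exist quorum certificates (PrepareQC or CommitQC, each formed from at least n − f votes) for two different consensus proposals. -/
import Mathlib

/-- Within a single view, there cannot exist quorum certificates (each formed
from at least n − f = 2f+1 votes) for two different proposals: if every correct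
replica in quorum Q1 voted for p, and every correct replica in quorum Q2 voted
for p', then p = p'. -/
theorem no_conflicting_qcs_in_view
    {α V : Type*} [DecidableEq α] (f : ℕ) (R B Q1 Q2 : Finset α)
    (vote : α → Option V) (p p' : V)
    (hR : R.card = 3 * f + 1)
    (hBR : B ⊆ R) (hB : B.card ≤ f)
    (hQ1R : Q1 ⊆ R) (hQ2R : Q2 ⊆ R)
    (hQ1 : 2 * f + 1 ≤ Q1.card) (hQ2 : 2 * f + 1 ≤ Q2.card)
    (hvote1 : ∀ r ∈ Q1, r ∉ B → vote r = some p)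
    (hvote2 : ∀ r ∈ Q2, r ∉ B → vote r = some p') :
    p = p' := by
  have hunion : (Q1 ∪ Q2).card ≤ 3 * f + 1 := hR ▸ Finset.card_le_card (Finset.union_subset hQ1R hQ2R)
  have hint : f + 1 ≤ (Q1 ∩ Q2).card := by
    have := Finset.card_union_add_card_inter Q1 Q2
    omega
  have hne : ((Q1 ∩ Q2) \ B).Nonempty := by
    rw [← Finset.card_pos]
    have := Finset.le_card_sdiff B (Q1 ∩ Q2)
    omega
  obtain ⟨r, hr⟩ := hne
  simp only [Finset.mem_sdiff, Finset.mem_inter] at hr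
  have h1 := hvote1 r hr.1.1 hr.2
  have h2 := hvote2 r hr.1.2 hr.2
  rw [h1] at h2
  exact Option.some_injective _ h2
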